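/- Let (X,d) be a metric space, A ⊆ X nonempty closed, ρ(x) = d(x,A), and φ : A → ℝ bounded and uniformly continuous. Define η_x(t) = sup{φ(a) : a ∈ A, d(a,x) < t} for t > ρ(x) and η_x(t) = inf φ for 0 < t ≤ ρ(x), and Bohr's extension f(x) = (1/ρ(x)) ∫_{ρ(x)}^{2ρ(x)} η_x(t) dt for x ∉ A, f|A = φ. Then f is uniformly continuous on X; moreover, for each τ > 0 the restriction of f to {x : d(x,A) ≥ τ} is (4·(sup φ − inf φ)/τ)-Lipschitz when φ has values in an interval of length sup φ − inf φ (in particular (4/τ)-Lipschitz when φ takes values in [0,1]). -/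

import Mathlib

open Metric Set MeasureTheory intervalIntegral
open scoped Classical

/-- Bohr's auxiliary function `η_{x,φ}`. -/
noncomputable def bohrEta {X : Type*} [MetricSpace X] (A : Set X) (φ : X → ℝ)
    (x : X) (t : ℝ) : ℝ :=
  if Metric.infDist x A < t then sSup (φ '' {a | a ∈ A ∧ dist a x < t})
  else sInf (φ '' A)

section Aux
variable {X : Type*} [MetricSpace X] {A : Set X} {φ : X → ℝ}

lemma bohrEta_mem (hA : A.Nonempty) (hb : BddAbove (φ '' A)) (hbl : BddBelow (φ '' A))
    (x : X) (t : ℝ) :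
    bohrEta A φ x t ∈ Icc (sInf (φ '' A)) (sSup (φ '' A)) := by
  rw [bohrEta]
  split_ifs with h
  · obtain ⟨a, haA, hax⟩ := (infDist_lt_iff hA).1 h
    have hmem : a ∈ {a | a ∈ A ∧ dist a x < t} := ⟨haA, by rwa [dist_comm]⟩
    have hsub : φ '' {a | a ∈ A ∧ dist a x < t} ⊆ φ '' A :=
      image_mono (fun b hb => hb.1)
    constructor
    · exact (csInf_le hbl (mem_image_of_mem _ haA)).trans
        (le_csSup (hb.mono hsub) (mem_image_of_mem _ hmem))
    · exact csSup_le_csSup hb ⟨φ a, mem_image_of_mem _ hmem⟩ hsub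
  · exact ⟨le_refl _, csInf_le_csSup (hA.image φ) hbl hb⟩

lemma bohrEta_mono (hA : A.Nonempty) (hb : BddAbove (φ '' A)) (hbl : BddBelow (φ '' A))
    (x : X) : Monotone (bohrEta A φ x) := by
  intro t s hts
  by_cases h1 : Metric.infDist x A < t
  · have h2 : Metric.infDist x A < s := h1.trans_le hts
    rw [bohrEta, bohrEta, if_pos h1, if_pos h2]
    obtain ⟨a, haA, hax⟩ := (infDist_lt_iff hA).1 h1
    have hmem : a ∈ {a | a ∈ A ∧ dist a x < t} := ⟨haA, by rwa [dist_comm]⟩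
    refine csSup_le_csSup (hb.mono (image_mono (fun b hb => hb.1)))
      ⟨φ a, mem_image_of_mem _ hmem⟩ (image_mono ?_)
    exact fun b hb => ⟨hb.1, hb.2.trans_le hts⟩
  · rw [bohrEta, if_neg h1]
    exact (bohrEta_mem hA hb hbl x s).1

lemma bohrEta_compare (hA : A.Nonempty) (hb : BddAbove (φ '' A)) (hbl : BddBelow (φ '' A))
    (x p : X) (t : ℝ) :
    bohrEta A φ x t ≤ bohrEta A φ p (t + dist x p) := by
  by_cases h1 : Metric.infDist x A < t
  · have h2 : Metric.infDist p A < t + dist x p := by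
      have := Metric.infDist_le_infDist_add_dist (x := p) (y := x) (s := A)
      rw [dist_comm p x] at this
      linarith
    rw [bohrEta, bohrEta, if_pos h1, if_pos h2]
    obtain ⟨a, haA, hax⟩ := (infDist_lt_iff hA).1 h1
    have hmem : a ∈ {a | a ∈ A ∧ dist a x < t} := ⟨haA, by rwa [dist_comm]⟩
    refine csSup_le_csSup (hb.mono (image_mono (fun b hb => hb.1)))
      ⟨φ a, mem_image_of_mem _ hmem⟩ (image_mono ?_)
    intro b hb
    refine ⟨hb.1, ?_⟩
    have := dist_triangle b x p
    linarith [hb.2]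
  · rw [bohrEta, if_neg h1]
    exact (bohrEta_mem hA hb hbl p (t + dist x p)).1

/-- Integral of a bounded function over an interval, upper bound. -/
lemma int_le_const {η : ℝ → ℝ} (hmono : Monotone η) {M c d : ℝ}
    (hM : ∀ t, η t ≤ M) (hcd : c ≤ d) : (∫ t in c..d, η t) ≤ (d - c) * M := by
  have h := intervalIntegral.integral_mono_on hcd hmono.intervalIntegrable
    (intervalIntegrable_const (μ := volume)) (fun t _ => hM t)
  simpa [smul_eq_mul, mul_comm] using h

lemma const_le_int {η : ℝ → ℝ} (hmono : Monotone η) {m c d : ℝ}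
    (hm : ∀ t, m ≤ η t) (hcd : c ≤ d) : (d - c) * m ≤ ∫ t in c..d, η t := by
  have h := intervalIntegral.integral_mono_on hcd
    (intervalIntegrable_const (μ := volume)) hmono.intervalIntegrable (fun t _ => hm t)
  simpa [smul_eq_mul, mul_comm] using h

/-- Shift estimate for integrals of monotone bounded functions. -/
lemma int_shift_le {η : ℝ → ℝ} (hmono : Monotone η) {m M a b h : ℝ}
    (hm : ∀ t, m ≤ η t) (hM : ∀ t, η t ≤ M) (hab : a ≤ b) (hh : 0 ≤ h) :
    (∫ t in (a+h)..(b+h), η t) - ∫ t in a..b, η t ≤ h * (M - m) := by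
  have hmM : m ≤ M := (hm 0).trans (hM 0)
  rcases le_or_gt h (b - a) with hcase | hcase
  · have h1 : a + h ≤ b := by linarith
    have e1 : (∫ t in (a+h)..b, η t) + ∫ t in b..(b+h), η t = ∫ t in (a+h)..(b+h), η t :=
      intervalIntegral.integral_add_adjacent_intervals hmono.intervalIntegrable
        hmono.intervalIntegrable
    have e2 : (∫ t in a..(a+h), η t) + ∫ t in (a+h)..b, η t = ∫ t in a..b, η t :=
      intervalIntegral.integral_add_adjacent_intervals hmono.intervalIntegrable
        hmono.intervalIntegrable
    have u1 : (∫ t in b..(b+h), η t) ≤ (b + h - b) * M :=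
      int_le_const hmono hM (by linarith)
    have u2 : (a + h - a) * m ≤ ∫ t in a..(a+h), η t :=
      const_le_int hmono hm (by linarith)
    have hb1 : b + h - b = h := by ring
    have ha1 : a + h - a = h := by ring
    rw [hb1] at u1; rw [ha1] at u2
    linarith
  · have u1 : (∫ t in (a+h)..(b+h), η t) ≤ (b + h - (a + h)) * M :=
      int_le_const hmono hM (by linarith)
    have u2 : (b - a) * m ≤ ∫ t in a..b, η t := const_le_int hmono hm hab
    have : b + h - (a + h) = b - a := by ring
    rw [this] at u1
    nlinarith

end Aux

/-- Bohr's extension operator `Φ`. -/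
noncomputable def bohrExt {X : Type*} [MetricSpace X] (A : Set X) (φ : X → ℝ) :
    X → ℝ := fun x =>
  if x ∈ A then φ x
  else (Metric.infDist x A)⁻¹ *
    ∫ t in (Metric.infDist x A)..(2 * Metric.infDist x A), bohrEta A φ x t

section Core
variable {X : Type*} [MetricSpace X] {A : Set X} {φ : X → ℝ}

lemma bohrExt_sub_le (hA : A.Nonempty) (hAc : IsClosed A)
    (hb : BddAbove (φ '' A)) (hbl : BddBelow (φ '' A))
    {x p : X} (hx : x ∉ A) (hp : p ∉ A) :
    bohrExt A φ x - bohrExt A φ p ≤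
      3 * (sSup (φ '' A) - sInf (φ '' A)) * dist x p / Metric.infDist p A := by
  set m := sInf (φ '' A) with hm
  set M := sSup (φ '' A) with hM
  set ρ₁ := Metric.infDist x A with hρ₁def
  set ρ₂ := Metric.infDist p A with hρ₂def
  set d := dist x p with hddef
  have hρ₁ : 0 < ρ₁ := (hAc.notMem_iff_infDist_pos hA).1 hx
  have hρ₂ : 0 < ρ₂ := (hAc.notMem_iff_infDist_pos hA).1 hp
  have hd : 0 ≤ d := dist_nonneg
  have hmono₁ := bohrEta_mono hA hb hbl x
  have hmono₂ := bohrEta_mono hA hb hbl p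
  have hmem₂ := fun t => bohrEta_mem hA hb hbl p t
  have hmM : m ≤ M := csInf_le_csSup (hA.image φ) hbl hb
  -- reparametrization of bohrExt x
  have hFx : bohrExt A φ x = ∫ s in (1:ℝ)..2, bohrEta A φ x (ρ₁ * s) := by
    rw [bohrExt, if_neg hx]
    have h2 := intervalIntegral.smul_integral_comp_mul_left (a := 1) (b := 2)
      (bohrEta A φ x) ρ₁
    rw [mul_one, mul_comm ρ₁ 2] at h2
    rw [← hρ₁def, ← h2, smul_eq_mul, ← mul_assoc, inv_mul_cancel₀ hρ₁.ne', one_mul]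
  -- comparison integrand monotone/integrable
  have hmono₁' : Monotone (fun s : ℝ => bohrEta A φ x (ρ₁ * s)) :=
    hmono₁.comp (fun s t hst => by nlinarith)
  have hmono₂' : Monotone (fun s : ℝ => bohrEta A φ p (ρ₂ * s + 3 * d)) :=
    hmono₂.comp (fun s t hst => by nlinarith)
  -- pointwise comparison on [1,2]
  have hpt : ∀ s ∈ Icc (1:ℝ) 2,
      bohrEta A φ x (ρ₁ * s) ≤ bohrEta A φ p (ρ₂ * s + 3 * d) := by
    intro s hs
    refine (bohrEta_compare hA hb hbl x p (ρ₁ * s)).trans (hmono₂ ?_)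
    have h1 : ρ₁ ≤ ρ₂ + d := by
      have := Metric.infDist_le_infDist_add_dist (x := x) (y := p) (s := A)
      rw [← hρ₁def, ← hρ₂def, ← hddef] at this; exact this
    nlinarith [hs.1, hs.2]
  have hstep : (∫ s in (1:ℝ)..2, bohrEta A φ x (ρ₁ * s)) ≤
      ∫ s in (1:ℝ)..2, bohrEta A φ p (ρ₂ * s + 3 * d) :=
    intervalIntegral.integral_mono_on (by norm_num) hmono₁'.intervalIntegrable
      hmono₂'.intervalIntegrable hpt
  -- rewrite shifted integral
  have hD : (∫ s in (1:ℝ)..2, bohrEta A φ p (ρ₂ * s + 3 * d)) =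
      ρ₂⁻¹ * ∫ t in (ρ₂ + 3 * d)..(2 * ρ₂ + 3 * d), bohrEta A φ p t := by
    have h2 := intervalIntegral.integral_comp_mul_add (a := 1) (b := 2)
      (bohrEta A φ p) hρ₂.ne' (3 * d)
    rw [mul_one, mul_comm ρ₂ 2] at h2
    rw [h2, smul_eq_mul]
  have hshift : (∫ t in (ρ₂ + 3 * d)..(2 * ρ₂ + 3 * d), bohrEta A φ p t) -
      (∫ t in ρ₂..(2 * ρ₂), bohrEta A φ p t) ≤ 3 * d * (M - m) :=
    int_shift_le hmono₂ (fun t => (hmem₂ t).1) (fun t => (hmem₂ t).2)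
      (by linarith) (by linarith)
  have hFp : bohrExt A φ p = ρ₂⁻¹ * ∫ t in ρ₂..(2 * ρ₂), bohrEta A φ p t := by
    rw [bohrExt, if_neg hp]
  rw [hFx, hFp]
  calc (∫ s in (1:ℝ)..2, bohrEta A φ x (ρ₁ * s)) -
        ρ₂⁻¹ * ∫ t in ρ₂..(2 * ρ₂), bohrEta A φ p t
      ≤ ρ₂⁻¹ * (∫ t in (ρ₂ + 3 * d)..(2 * ρ₂ + 3 * d), bohrEta A φ p t) -
        ρ₂⁻¹ * ∫ t in ρ₂..(2 * ρ₂), bohrEta A φ p t := by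
        rw [← hD]; linarith
    _ = ρ₂⁻¹ * ((∫ t in (ρ₂ + 3 * d)..(2 * ρ₂ + 3 * d), bohrEta A φ p t) -
        ∫ t in ρ₂..(2 * ρ₂), bohrEta A φ p t) := by ring
    _ ≤ ρ₂⁻¹ * (3 * d * (M - m)) := by
        have h0 : (0:ℝ) ≤ ρ₂⁻¹ := by positivity
        exact mul_le_mul_of_nonneg_left hshift h0
    _ = 3 * (M - m) * d / ρ₂ := by field_simp

end Core

section Near
variable {X : Type*} [MetricSpace X] {A : Set X} {φ : X → ℝ}

lemma bohrExt_near (hA : A.Nonempty) (hAc : IsClosed A)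
    (hb : BddAbove (φ '' A)) (hbl : BddBelow (φ '' A))
    {ε δ₁ : ℝ} (hε : 0 ≤ ε) (hδ : 0 < δ₁)
    (hmod : ∀ a ∈ A, ∀ b ∈ A, dist a b < δ₁ → |φ a - φ b| ≤ ε)
    {x : X} (hx : Metric.infDist x A ≤ δ₁ / 8) :
    ∃ a ∈ A, dist x a ≤ δ₁ / 4 ∧ |bohrExt A φ x - φ a| ≤ ε := by
  by_cases hxA : x ∈ A
  · refine ⟨x, hxA, by simp [hδ.le]; linarith, ?_⟩
    rw [bohrExt, if_pos hxA]; simpa using hε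
  · set ρ := Metric.infDist x A with hρdef
    have hρ : 0 < ρ := (hAc.notMem_iff_infDist_pos hA).1 hxA
    obtain ⟨a, haA, hax⟩ := (infDist_lt_iff hA).1 (show Metric.infDist x A < 2 * ρ by
      rw [← hρdef]; linarith)
    refine ⟨a, haA, by linarith, ?_⟩
    have hmono := bohrEta_mono hA hb hbl x
    -- pointwise bounds on (ρ, 2ρ]
    have hpt : ∀ t ∈ Ioc ρ (2 * ρ),
        φ a - ε ≤ bohrEta A φ x t ∧ bohrEta A φ x t ≤ φ a + ε := by
      intro t ht
      have h1 : Metric.infDist x A < t := by rw [← hρdef]; exact ht.1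
      obtain ⟨b₀, hb₀A, hb₀x⟩ := (infDist_lt_iff hA).1 h1
      have hmem : b₀ ∈ {a | a ∈ A ∧ dist a x < t} := ⟨hb₀A, by rwa [dist_comm]⟩
      have hbsub : ∀ b ∈ {a | a ∈ A ∧ dist a x < t}, |φ b - φ a| ≤ ε := by
        intro b hbmem
        refine hmod b hbmem.1 a haA ?_
        have h3 := dist_triangle b x a
        have h4 : dist b x < t := hbmem.2
        have h5 : t ≤ 2 * ρ := ht.2
        linarith [hx]
      rw [bohrEta, if_pos h1]
      have hbA : BddAbove (φ '' {a | a ∈ A ∧ dist a x < t}) :=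
        hb.mono (image_mono (fun b hb => hb.1))
      constructor
      · have h2 := abs_le.1 (hbsub b₀ hmem)
        have : φ a - ε ≤ φ b₀ := by linarith [h2.1, h2.2]
        exact this.trans (le_csSup hbA (mem_image_of_mem _ hmem))
      · refine csSup_le ⟨φ b₀, mem_image_of_mem _ hmem⟩ ?_
        rintro y ⟨b, hbmem, rfl⟩
        have h2 := abs_le.1 (hbsub b hbmem)
        linarith [h2.1, h2.2]
    have hle : ρ ≤ 2 * ρ := by linarith
    have hint : IntervalIntegrable (bohrEta A φ x) volume ρ (2 * ρ) :=
      hmono.intervalIntegrable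
    have hIon : IntegrableOn (bohrEta A φ x) (Ioc ρ (2 * ρ)) volume :=
      (intervalIntegrable_iff_integrableOn_Ioc_of_le hle).1 hint
    have hconst : ∀ c : ℝ, (∫ _ in Ioc ρ (2 * ρ), c ∂volume) = ρ * c := by
      intro c
      rw [MeasureTheory.setIntegral_const, Real.volume_real_Ioc, smul_eq_mul,
        max_eq_left (by linarith : (0:ℝ) ≤ 2 * ρ - ρ)]
      ring
    have hub : (∫ t in Ioc ρ (2 * ρ), bohrEta A φ x t ∂volume) ≤ ρ * (φ a + ε) := by
      rw [← hconst (φ a + ε)]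
      exact setIntegral_mono_on hIon (integrableOn_const (by
        simp [Real.volume_Ioc])) measurableSet_Ioc
        (fun t ht => (hpt t ht).2)
    have hlb : ρ * (φ a - ε) ≤ ∫ t in Ioc ρ (2 * ρ), bohrEta A φ x t ∂volume := by
      rw [← hconst (φ a - ε)]
      exact setIntegral_mono_on (integrableOn_const (by
        simp [Real.volume_Ioc])) hIon measurableSet_Ioc
        (fun t ht => (hpt t ht).1)
    rw [bohrExt, if_neg hxA, ← hρdef, intervalIntegral.integral_of_le hle]
    rw [abs_le]
    have hρi : (0:ℝ) ≤ ρ⁻¹ := by positivity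
    constructor
    · have := mul_le_mul_of_nonneg_left hlb hρi
      rw [← mul_assoc, inv_mul_cancel₀ hρ.ne', one_mul] at this
      linarith
    · have := mul_le_mul_of_nonneg_left hub hρi
      rw [← mul_assoc, inv_mul_cancel₀ hρ.ne', one_mul] at this
      linarith

end Near

/-- Bohr's extension of a bounded uniformly continuous function is uniformly
continuous; moreover it is `(4(sup φ − inf φ)/τ)`-Lipschitz on the set of points at
distance at least `τ` from `A`. -/
theorem stmt_19 {X : Type*} [MetricSpace X] (A : Set X) (hA : A.Nonempty)
    (hAc : IsClosed A) (φ : X → ℝ)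
    (hφb : ∃ C : ℝ, ∀ a ∈ A, |φ a| ≤ C) (hφu : UniformContinuousOn φ A) :
    UniformContinuous (bohrExt A φ) ∧
    ∀ τ : ℝ, 0 < τ → ∀ x p : X,
      τ ≤ Metric.infDist x A → τ ≤ Metric.infDist p A →
      |bohrExt A φ x - bohrExt A φ p| ≤
        4 * ((⨆ a : A, φ a) - ⨅ a : A, φ a) / τ * dist x p := by
  obtain ⟨C, hC⟩ := hφb
  have hb : BddAbove (φ '' A) := ⟨C, by rintro y ⟨a, haA, rfl⟩; exact (abs_le.1 (hC a haA)).2⟩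
  have hbl : BddBelow (φ '' A) := ⟨-C, by rintro y ⟨a, haA, rfl⟩; exact (abs_le.1 (hC a haA)).1⟩
  have hMm : sInf (φ '' A) ≤ sSup (φ '' A) := csInf_le_csSup (hA.image φ) hbl hb
  set m := sInf (φ '' A) with hmdef
  set M := sSup (φ '' A) with hMdef
  have hsup : (⨆ a : A, φ a) = M := by rw [hMdef, Set.image_eq_range]; rfl
  have hinf : (⨅ a : A, φ a) = m := by rw [hmdef, Set.image_eq_range]; rfl
  have hnotmem : ∀ z : X, ∀ τ : ℝ, 0 < τ → τ ≤ Metric.infDist z A → z ∉ A := by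
    intro z τ hτ hz hzA
    rw [Metric.infDist_zero_of_mem hzA] at hz; linarith
  constructor
  · -- uniform continuity
    rw [Metric.uniformContinuous_iff]
    intro ε hε
    obtain ⟨δ₁, hδ₁, hmodlt⟩ := (Metric.uniformContinuousOn_iff.1 hφu) (ε/8) (by linarith)
    have hmod : ∀ a ∈ A, ∀ b ∈ A, dist a b < δ₁ → |φ a - φ b| ≤ ε/8 := by
      intro a ha b hb' h
      have := hmodlt a ha b hb' h
      rw [Real.dist_eq] at this; linarith
    set τ₀ := δ₁ / 16 with hτ₀def
    have hτ₀ : 0 < τ₀ := by positivity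
    have h3K : (0:ℝ) < 3 * (M - m) + 1 := by linarith
    set δ₂ := ε * τ₀ / (3 * (M - m) + 1) with hδ₂def
    have hδ₂ : 0 < δ₂ := div_pos (by positivity) h3K
    refine ⟨min τ₀ δ₂, lt_min hτ₀ hδ₂, ?_⟩
    intro u v huv
    rw [Real.dist_eq]
    by_cases hfar : τ₀ ≤ Metric.infDist u A ∧ τ₀ ≤ Metric.infDist v A
    · obtain ⟨hu, hv⟩ := hfar
      have huA : u ∉ A := hnotmem u τ₀ hτ₀ hu
      have hvA : v ∉ A := hnotmem v τ₀ hτ₀ hv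
      have k1 := bohrExt_sub_le hA hAc hb hbl huA hvA
      have k2 := bohrExt_sub_le hA hAc hb hbl hvA huA
      rw [dist_comm v u] at k2
      have hd : (0:ℝ) ≤ dist u v := dist_nonneg
      have hduv : dist u v < δ₂ := lt_of_lt_of_le huv (min_le_right _ _)
      have h1 : dist u v * (3 * (M - m) + 1) < ε * τ₀ := by
        rw [hδ₂def, lt_div_iff₀ h3K] at hduv; exact hduv
      have bound : ∀ r : ℝ, τ₀ ≤ r → 3 * (M - m) * dist u v / r < ε := by
        intro r hr
        have h0 : 0 < r := lt_of_lt_of_le hτ₀ hr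
        rw [div_lt_iff₀ h0]
        have h2 : ε * τ₀ ≤ ε * r := mul_le_mul_of_nonneg_left hr (le_of_lt hε)
        nlinarith
      rw [abs_sub_lt_iff]
      exact ⟨lt_of_le_of_lt k1 (bound _ hv), lt_of_le_of_lt k2 (bound _ hu)⟩
    · have hor : Metric.infDist u A < τ₀ ∨ Metric.infDist v A < τ₀ := by
        by_contra h; push_neg at h; exact hfar ⟨h.1, h.2⟩
      have hduv : dist u v < τ₀ := lt_of_lt_of_le huv (min_le_left _ _)
      have hduv0 : (0:ℝ) ≤ dist u v := dist_nonneg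
      have ht1 := Metric.infDist_le_infDist_add_dist (x := u) (y := v) (s := A)
      have ht2 := Metric.infDist_le_infDist_add_dist (x := v) (y := u) (s := A)
      rw [dist_comm v u] at ht2
      have hboth : Metric.infDist u A ≤ δ₁ / 8 ∧ Metric.infDist v A ≤ δ₁ / 8 := by
        rcases hor with h | h
        · constructor <;> linarith
        · constructor <;> linarith
      obtain ⟨a, haA, hua, hfa⟩ := bohrExt_near hA hAc hb hbl
        (by linarith : (0:ℝ) ≤ ε/8) hδ₁ hmod hboth.1
      obtain ⟨c, hcA, hvc, hfc⟩ := bohrExt_near hA hAc hb hbl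
        (by linarith : (0:ℝ) ≤ ε/8) hδ₁ hmod hboth.2
      have hac : dist a c < δ₁ := by
        have t1 := dist_triangle a u c
        have t2 := dist_triangle u v c
        have t3 : dist a u = dist u a := dist_comm a u
        have t4 : dist v c = dist c v := dist_comm v c
        linarith
      have hφac := hmod a haA c hcA hac
      have heq : bohrExt A φ u - bohrExt A φ v =
          (bohrExt A φ u - φ a) + (φ a - φ c) + (φ c - bohrExt A φ v) := by ring
      rw [heq]
      have habs : |(bohrExt A φ u - φ a) + (φ a - φ c) + (φ c - bohrExt A φ v)| ≤
          |bohrExt A φ u - φ a| + |φ a - φ c| + |φ c - bohrExt A φ v| :=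
        (abs_add_le _ _).trans (add_le_add_left (abs_add_le _ _) _)
      have hfc' : |φ c - bohrExt A φ v| ≤ ε/8 := by
        rw [abs_sub_comm]; exact hfc
      linarith
  · -- Lipschitz estimate
    intro τ hτ x p hx hp
    rw [hsup, hinf]
    have hxA : x ∉ A := hnotmem x τ hτ hx
    have hpA : p ∉ A := hnotmem p τ hτ hp
    have k1 := bohrExt_sub_le hA hAc hb hbl hxA hpA
    have k2 := bohrExt_sub_le hA hAc hb hbl hpA hxA
    rw [dist_comm p x] at k2
    have hd : (0:ℝ) ≤ dist x p := dist_nonneg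
    have bound : ∀ r : ℝ, τ ≤ r →
        3 * (M - m) * dist x p / r ≤ 4 * (M - m) / τ * dist x p := by
      intro r hr
      have h0 : 0 < r := lt_of_lt_of_le hτ hr
      rw [div_le_iff₀ h0, div_mul_eq_mul_div, div_mul_eq_mul_div, le_div_iff₀ hτ]
      nlinarith [mul_nonneg (mul_nonneg (by linarith : (0:ℝ) ≤ M - m) hd)
        (by linarith : (0:ℝ) ≤ 4 * r - 3 * τ)]
    rw [abs_sub_le_iff]
    exact ⟨k1.trans (bound _ hp), k2.trans (bound _ hx)⟩
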